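/- Let k < p be natural numbers, let α : ℕ → ℝ satisfy α_{k+1} ≠ 0, and let f(ξ) = Σ_{m=k+1}^{p} α_m ξ^m. Then, as δ → 0⁺, the ratio (∫_0^δ (f′(ξ))² dξ) / (∫_0^δ (f(ξ))² dξ) is Θ(δ^{-2}); in particular this lower bound on the largest generalized eigenvalue with the consistent mass is independent of the spline degree p and smoothness k. -/

import Mathlib

open Topology Asymptotics

open Filter
lemma theta_one_of_tendsto {l : Filter ℝ} {Q : ℝ → ℝ} {c : ℝ} (hc : c ≠ 0)
    (h : Tendsto Q l (𝓝 c)) : Q =Θ[l] (fun _ => (1:ℝ)) := by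
  constructor
  · exact h.isBigO_one ℝ
  · have hev : ∀ᶠ x in l, |c| / 2 ≤ |Q x| := by
      have hm : ∀ᶠ x in l, Q x ∈ Set.Ioo (c - |c|/2) (c + |c|/2) :=
        h (Ioo_mem_nhds (by nlinarith [abs_pos.2 hc]) (by nlinarith [abs_pos.2 hc]))
      filter_upwards [hm] with x hx
      obtain ⟨h1, h2⟩ := hx
      have h3 := abs_sub_abs_le_abs_sub c (Q x)
      have h4 : |c - Q x| ≤ |c|/2 := abs_le.2 ⟨by linarith, by linarith⟩
      linarith
    refine Asymptotics.IsBigO.of_bound (2 / |c|) ?_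
    filter_upwards [hev] with x hx
    have hcpos : (0:ℝ) < |c| := abs_pos.2 hc
    rw [Real.norm_eq_abs, Real.norm_eq_abs]
    rw [abs_one, div_mul_eq_mul_div, le_div_iff₀ hcpos]
    nlinarith

lemma integral_sq_sum (s : Finset ℕ) (β : ℕ → ℝ) (e : ℕ → ℕ) (δ : ℝ) :
    (∫ ξ in (0:ℝ)..δ, (∑ m ∈ s, β m * ξ ^ (e m)) ^ 2)
      = ∑ m ∈ s, ∑ n ∈ s, β m * β n * (δ ^ (e m + e n + 1) / (e m + e n + 1)) := by
  have hint : ∀ ξ : ℝ, (∑ m ∈ s, β m * ξ ^ (e m)) ^ 2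
      = ∑ m ∈ s, ∑ n ∈ s, (β m * β n) * ξ ^ (e m + e n) := by
    intro ξ
    rw [sq, Finset.sum_mul_sum]
    refine Finset.sum_congr rfl fun m _ => Finset.sum_congr rfl fun n _ => ?_
    rw [pow_add]; ring
  simp only [hint]
  rw [intervalIntegral.integral_finset_sum]
  · refine Finset.sum_congr rfl fun m _ => ?_
    rw [intervalIntegral.integral_finset_sum]
    · refine Finset.sum_congr rfl fun n _ => ?_
      rw [intervalIntegral.integral_const_mul, integral_pow]
      push_cast
      ring
    · intro n _
      exact (Continuous.intervalIntegrable (by continuity) _ _)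
  · intro m _
    exact (Continuous.intervalIntegrable (by continuity) _ _)

lemma thetaAux (s : Finset ℕ) (β : ℕ → ℝ) (e : ℕ → ℕ) (E m0 : ℕ)
    (hm0 : m0 ∈ s) (hE : e m0 = E) (hgt : ∀ m ∈ s, m ≠ m0 → E < e m) (hβ : β m0 ≠ 0) :
    (fun δ : ℝ => ∫ ξ in (0:ℝ)..δ, (∑ m ∈ s, β m * ξ ^ (e m)) ^ 2)
      =Θ[𝓝[>] (0:ℝ)] (fun δ : ℝ => δ ^ (2 * E + 1)) := by
  have hge : ∀ m ∈ s, E ≤ e m := by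
    intro m hm
    by_cases h : m = m0
    · simp [h, hE]
    · exact (hgt m hm h).le
  set Q : ℝ → ℝ := fun δ =>
    ∑ m ∈ s, ∑ n ∈ s, β m * β n * (δ ^ (e m + e n - 2 * E) / (e m + e n + 1)) with hQ
  have hQcont : Continuous Q := by
    apply continuous_finset_sum; intro m _
    apply continuous_finset_sum; intro n _
    continuity
  have hQ0 : Q 0 = β m0 ^ 2 / (2 * E + 1) := by
    rw [hQ]
    simp only
    rw [Finset.sum_eq_single m0]
    · rw [Finset.sum_eq_single m0]
      · rw [hE]
        have : 2 * E - 2 * E = 0 := by omega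
        simp [this, ← two_mul]
        ring
      · intro n hn hne
        have h1 : E < e n := hgt n hn hne
        have h2 : e m0 + e n - 2 * E ≠ 0 := by rw [hE]; omega
        simp [zero_pow h2]
      · intro h; exact absurd hm0 h
    · intro m hm hne
      have h1 : E < e m := hgt m hm hne
      have h2 : ∀ n ∈ s, e m + e n - 2 * E ≠ 0 := by
        intro n hn; have := hge n hn; omega
      rw [Finset.sum_eq_zero]
      intro n hn
      simp [zero_pow (h2 n hn)]
    · intro h; exact absurd hm0 h
  have hQ0ne : Q 0 ≠ 0 := by
    rw [hQ0]
    positivity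
  have htend : Tendsto Q (𝓝[>] (0:ℝ)) (𝓝 (Q 0)) :=
    (hQcont.tendsto 0).mono_left nhdsWithin_le_nhds
  have hQθ : Q =Θ[𝓝[>] (0:ℝ)] (fun _ => (1:ℝ)) := theta_one_of_tendsto hQ0ne htend
  have heq : (fun δ : ℝ => ∫ ξ in (0:ℝ)..δ, (∑ m ∈ s, β m * ξ ^ (e m)) ^ 2)
      =ᶠ[𝓝[>] (0:ℝ)] fun δ => δ ^ (2 * E + 1) * Q δ := by
    filter_upwards [self_mem_nhdsWithin] with δ (hδ : (0:ℝ) < δ)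
    rw [integral_sq_sum, hQ, Finset.mul_sum]
    refine Finset.sum_congr rfl fun m hm => ?_
    rw [Finset.mul_sum]
    refine Finset.sum_congr rfl fun n hn => ?_
    have h1 : e m + e n + 1 = (2 * E + 1) + (e m + e n - 2 * E) := by
      have := hge m hm; have := hge n hn; omega
    rw [h1, pow_add]
    ring
  calc (fun δ : ℝ => ∫ ξ in (0:ℝ)..δ, (∑ m ∈ s, β m * ξ ^ (e m)) ^ 2)
      =Θ[𝓝[>] (0:ℝ)] fun δ => δ ^ (2 * E + 1) * Q δ := heq.isTheta
    _ =Θ[𝓝[>] (0:ℝ)] fun δ => δ ^ (2 * E + 1) * 1 :=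
        (isTheta_refl _ _).mul hQθ
    _ = fun δ : ℝ => δ ^ (2 * E + 1) := by funext δ; ring


/-- For `f(ξ) = ∑_{m=k+1}^{p} α_m ξ^m` with `α_{k+1} ≠ 0`, the ratio
`(∫_0^δ (f′)²) / (∫_0^δ f²)` (stiffness over consistent-mass diagonal entry) is
`Θ(δ^{-2})` as `δ → 0⁺`, independently of `p` and `k`. -/
theorem rayleigh_ratio_consistent_asymptotics_1d (k p : ℕ) (hkp : k < p)
    (α : ℕ → ℝ) (hα : α (k + 1) ≠ 0) :
    (fun δ : ℝ =>
        (∫ ξ in (0:ℝ)..δ,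
          (deriv (fun t : ℝ => ∑ m ∈ Finset.Icc (k + 1) p, α m * t ^ m) ξ) ^ 2) /
        (∫ ξ in (0:ℝ)..δ, (∑ m ∈ Finset.Icc (k + 1) p, α m * ξ ^ m) ^ 2))
      =Θ[𝓝[>] (0:ℝ)] (fun δ : ℝ => δ ^ (-2 : ℤ)) := by
  set s := Finset.Icc (k + 1) p with hs
  have hm0 : k + 1 ∈ s := Finset.mem_Icc.2 ⟨le_refl _, hkp⟩
  -- derivative formula
  have hderiv : ∀ ξ : ℝ, deriv (fun t : ℝ => ∑ m ∈ s, α m * t ^ m) ξ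
      = ∑ m ∈ s, ((m : ℝ) * α m) * ξ ^ (m - 1) := by
    intro ξ
    have h1 : HasDerivAt (fun t : ℝ => ∑ m ∈ s, α m * t ^ m)
        (∑ m ∈ s, α m * ((m : ℝ) * ξ ^ (m - 1))) ξ :=
      HasDerivAt.fun_sum fun m _ => (hasDerivAt_pow m ξ).const_mul (α m)
    rw [h1.deriv]
    exact Finset.sum_congr rfl fun m _ => by ring
  -- numerator Θ
  have hN : (fun δ : ℝ => ∫ ξ in (0:ℝ)..δ,
      (deriv (fun t : ℝ => ∑ m ∈ s, α m * t ^ m) ξ) ^ 2)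
      =Θ[𝓝[>] (0:ℝ)] (fun δ : ℝ => δ ^ (2 * k + 1)) := by
    have := thetaAux s (fun m => (m : ℝ) * α m) (fun m => m - 1) k (k + 1) hm0
      (by show k + 1 - 1 = k; omega)
      (fun m hm hne => by
        have := (Finset.mem_Icc.1 hm).1
        show k < m - 1
        omega)
      (by push_cast; positivity)
    simpa only [hderiv] using this
  -- denominator Θ
  have hM : (fun δ : ℝ => ∫ ξ in (0:ℝ)..δ, (∑ m ∈ s, α m * ξ ^ m) ^ 2)
      =Θ[𝓝[>] (0:ℝ)] (fun δ : ℝ => δ ^ (2 * (k + 1) + 1)) := by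
    have := thetaAux s α (fun m => m) (k + 1) (k + 1) hm0 rfl
      (fun m hm hne => by
        have := (Finset.mem_Icc.1 hm).1
        show k + 1 < m
        omega) hα
    simpa using this
  have hdiv := hN.div hM
  refine hdiv.trans_eventuallyEq ?_
  filter_upwards [self_mem_nhdsWithin] with δ (hδ : (0:ℝ) < δ)
  have hδne : δ ≠ 0 := ne_of_gt hδ
  have h1 : 2 * (k + 1) + 1 = (2 * k + 1) + 2 := by omega
  rw [zpow_neg]
  have h2 : δ ^ (2 * (k + 1) + 1) = δ ^ (2 * k + 1) * δ ^ 2 := by rw [h1, pow_add]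
  rw [h2, div_mul_eq_div_div, div_self (pow_ne_zero _ hδne), one_div]
  norm_num
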